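/- For 0 < q < 1, the von Neumann algebra generated by {a, a*, b, b*} coincides with B(ℓ²(ℕ)) ⊗̄ L(ℤ): inside the ring of bounded operators on ℓ²(ℕ × ℤ, ℂ), the double centralizer of {a, a*, b, b*} equals the double centralizer of the set {e_{ij} ⊗ S^n : i, j ∈ ℕ, n ∈ ℤ}, where a ξ_{n,k} = √(1 − q^{2n}) ξ_{n−1,k}, b ξ_{n,k} = q^n ξ_{n,k+1}, and e_{ij} ⊗ S^n sends ξ_{m,k} to δ_{j,m} ξ_{i,k+n}. -/

import Mathlib

noncomputable section

/-- The Hilbert space `ℓ²(ℕ × ℤ, ℂ)`. -/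
abbrev H : Type := lp (fun _ : ℕ × ℤ => ℂ) 2

/-- The canonical orthonormal basis vector `ξ_{n,k}` of `ℓ²(ℕ × ℤ, ℂ)`.
(The convention `ξ_{n,k} = 0` for `n < 0` is realized via truncated subtraction
on `ℕ` together with the vanishing coefficient `√(1 - q⁰) = 0`.) -/
def ξ (p : ℕ × ℤ) : H := lp.single 2 p 1

open scoped InnerProductSpace ComplexConjugate ENNReal

lemma xi_coeff (v : H) (p : ℕ × ℤ) : ⟪ξ p, v⟫_ℂ = v p := by
  simp [ξ, lp.inner_single_left, RCLike.inner_apply]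

lemma xi_apply (p r : ℕ × ℤ) : (ξ p : ∀ _ : ℕ × ℤ, ℂ) r = if r = p then 1 else 0 := by
  simp [ξ, lp.single_apply, Pi.single_apply]

lemma H_ext {v w : H} (h : ∀ p, (v : ∀ _ : ℕ × ℤ, ℂ) p = w p) : v = w := by
  apply lp.ext (funext h)

lemma single_eq_smul (p : ℕ × ℤ) (c : ℂ) : lp.single 2 p c = c • ξ p := by
  apply H_ext
  intro r
  rw [lp.coeFn_smul]
  simp [lp.single_apply, ξ, Pi.smul_apply, Pi.single_apply]

lemma clm_ext {U V : H →L[ℂ] H} (h : ∀ p, U (ξ p) = V (ξ p)) : U = V := by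
  refine ContinuousLinearMap.ext fun f => ?_
  have hs := lp.hasSum_single ENNReal.ofNat_ne_top f
  have hU : HasSum (fun p => f p • U (ξ p)) (U f) := by
    simpa [single_eq_smul] using hs.mapL U
  have hV : HasSum (fun p => f p • V (ξ p)) (V f) := by
    simpa [single_eq_smul] using hs.mapL V
  simp_rw [h] at hU
  exact hU.unique hV
section emap

variable (i j : ℕ) (n : ℤ)

lemma emap_mem (v : H) :
    Memℓp (fun p : ℕ × ℤ => if p.1 = i then v (j, p.2 - n) else 0) 2 := by
  apply memℓp_gen
  have hv : Summable (fun p : ℕ × ℤ => ‖v p‖ ^ (2 : ℝ≥0∞).toReal) :=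
    (lp.memℓp v).summable (by norm_num)
  have he : Function.Injective (fun k : ℤ => ((i, k) : ℕ × ℤ)) := by
    intro x y h; simpa using h
  have he' : Function.Injective (fun k : ℤ => ((j, k - n) : ℕ × ℤ)) := by
    intro x y h; simp [Prod.ext_iff] at h; omega
  refine (he.summable_iff ?_).mp ?_
  · intro p hp
    have : p.1 ≠ i := by
      intro h; exact hp ⟨p.2, by simp [← h]⟩
    simp [this]
  · have := hv.comp_injective he'
    refine this.congr fun k => ?_
    simp
end emap

section emap2
variable (i j : ℕ) (n : ℤ)

def Emap : H →L[ℂ] H :=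
  LinearMap.mkContinuous
    { toFun := fun v => (⟨fun p => if p.1 = i then v (j, p.2 - n) else 0, emap_mem i j n v⟩ : H)
      map_add' := by
        intro v w
        apply H_ext
        intro p
        change (if p.1 = i then (v + w) (j, p.2 - n) else 0)
          = (if p.1 = i then v (j, p.2 - n) else 0) + (if p.1 = i then w (j, p.2 - n) else 0)
        rw [lp.coeFn_add]
        split <;> simp
      map_smul' := by
        intro c v
        apply H_ext
        intro p
        change (if p.1 = i then (c • v) (j, p.2 - n) else 0)
          = c • (if p.1 = i then v (j, p.2 - n) else 0)
        rw [lp.coeFn_smul]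
        split <;> simp }
    1
    (by
      intro v
      rw [one_mul]
      refine lp.norm_le_of_tsum_le (by norm_num) (norm_nonneg v) ?_
      have hv : Summable (fun p : ℕ × ℤ => ‖v p‖ ^ (2 : ℝ≥0∞).toReal) :=
        (lp.memℓp v).summable (by norm_num)
      have he : Function.Injective (fun k : ℤ => ((i, k) : ℕ × ℤ)) := by
        intro x y h; simpa using h
      have he' : Function.Injective (fun k : ℤ => ((j, k - n) : ℕ × ℤ)) := by
        intro x y h; simp [Prod.ext_iff] at h; omega
      have h1 : ∑' p : ℕ × ℤ,
          ‖(if p.1 = i then v (j, p.2 - n) else 0 : ℂ)‖ ^ (2 : ℝ≥0∞).toReal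
          = ∑' k : ℤ, ‖v (j, k - n)‖ ^ (2 : ℝ≥0∞).toReal := by
        rw [← he.tsum_eq]
        · simp
        · intro p hp
          by_cases h : p.1 = i
          · exact ⟨p.2, by rw [← h]⟩
          · exfalso
            simp only [Function.mem_support] at hp
            exact hp (by simp [h])
      calc ∑' p : ℕ × ℤ, ‖(⟨fun p => if p.1 = i then v (j, p.2 - n) else 0,
              emap_mem i j n v⟩ : H) p‖ ^ (2 : ℝ≥0∞).toReal
          = ∑' k : ℤ, ‖v (j, k - n)‖ ^ (2 : ℝ≥0∞).toReal := h1
        _ ≤ ∑' p : ℕ × ℤ, ‖v p‖ ^ (2 : ℝ≥0∞).toReal := by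
            refine (hv.comp_injective he').tsum_le_tsum_of_inj _ he' (fun c _ => by positivity)
              (fun k => le_of_eq rfl) hv
        _ = ‖v‖ ^ (2 : ℝ≥0∞).toReal := (lp.norm_rpow_eq_tsum (by norm_num) v).symm)

lemma Emap_apply (v : H) (p : ℕ × ℤ) :
    (Emap i j n v) p = if p.1 = i then v (j, p.2 - n) else 0 := rfl

lemma Emap_xi (m : ℕ) (k : ℤ) :
    Emap i j n (ξ (m, k)) = if j = m then ξ (i, k + n) else 0 := by
  apply H_ext
  rintro ⟨p1, p2⟩
  rw [Emap_apply]
  have hco : ((if j = m then ξ (i, k + n) else 0 : H) : ∀ _ : ℕ × ℤ, ℂ) (p1, p2)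
      = if j = m then (ξ (i, k + n) : ∀ _ : ℕ × ℤ, ℂ) (p1, p2) else 0 := by
    split <;> simp
  rw [hco]
  simp only [xi_apply, Prod.mk.injEq]
  split_ifs <;> simp_all <;> omega
end emap2

section ops
open ContinuousLinearMap
variable {q : ℝ} {a b : H →L[ℂ] H}

lemma sqrt0 : Real.sqrt (1 - q ^ (2 * 0)) = 0 := by norm_num

lemma adj_a_xi
    (ha : ∀ (n : ℕ) (k : ℤ),
      a (ξ (n, k)) = (Real.sqrt (1 - q ^ (2 * n)) : ℂ) • ξ (n - 1, k))
    (m : ℕ) (l : ℤ) :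
    adjoint a (ξ (m, l)) = (Real.sqrt (1 - q ^ (2 * (m + 1))) : ℂ) • ξ (m + 1, l) := by
  apply H_ext
  rintro ⟨s1, s2⟩
  rw [← xi_coeff, adjoint_inner_right, ha, inner_smul_left, xi_coeff, xi_apply]
  rw [lp.coeFn_smul, Pi.smul_apply, xi_apply]
  simp only [Complex.conj_ofReal, smul_eq_mul, Prod.mk.injEq]
  split_ifs with h1 h2 h2
  · obtain ⟨hA, hB⟩ := h1
    obtain ⟨hC, hD⟩ := h2
    subst hC
    norm_num
  · obtain ⟨hA, hB⟩ := h1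
    have : s1 = 0 := by omega
    subst this
    subst hB
    rw [sqrt0]
    simp
  · exfalso; obtain ⟨hC, hD⟩ := h2; omega
  · simp

lemma adj_b_xi
    (hb : ∀ (n : ℕ) (k : ℤ), b (ξ (n, k)) = ((q ^ n : ℝ) : ℂ) • ξ (n, k + 1))
    (m : ℕ) (l : ℤ) :
    adjoint b (ξ (m, l)) = ((q ^ m : ℝ) : ℂ) • ξ (m, l - 1) := by
  apply H_ext
  rintro ⟨s1, s2⟩
  rw [← xi_coeff, adjoint_inner_right, hb, inner_smul_left, xi_coeff, xi_apply]
  rw [lp.coeFn_smul, Pi.smul_apply, xi_apply]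
  simp only [Complex.conj_ofReal, smul_eq_mul, Prod.mk.injEq]
  split_ifs with h1 h2 h2
  · obtain ⟨hA, hB⟩ := h2; subst hA; rfl
  · exfalso; obtain ⟨hA, hB⟩ := h1; exact h2 ⟨hA, by omega⟩
  · exfalso; obtain ⟨hA, hB⟩ := h2; exact h1 ⟨hA, by omega⟩
  · simp

lemma coeff_a
    (ha : ∀ (n : ℕ) (k : ℤ),
      a (ξ (n, k)) = (Real.sqrt (1 - q ^ (2 * n)) : ℂ) • ξ (n - 1, k))
    (v : H) (m : ℕ) (l : ℤ) :
    (a v) (m, l) = (Real.sqrt (1 - q ^ (2 * (m + 1))) : ℂ) * v (m + 1, l) := by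
  rw [← xi_coeff, ← adjoint_inner_left, adj_a_xi ha, inner_smul_left, xi_coeff,
    Complex.conj_ofReal]

lemma coeff_adj_a
    (ha : ∀ (n : ℕ) (k : ℤ),
      a (ξ (n, k)) = (Real.sqrt (1 - q ^ (2 * n)) : ℂ) • ξ (n - 1, k))
    (v : H) (m : ℕ) (l : ℤ) :
    (adjoint a v) (m, l) = (Real.sqrt (1 - q ^ (2 * m)) : ℂ) * v (m - 1, l) := by
  rw [← xi_coeff, adjoint_inner_right, ha, inner_smul_left, xi_coeff, Complex.conj_ofReal]

lemma coeff_b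
    (hb : ∀ (n : ℕ) (k : ℤ), b (ξ (n, k)) = ((q ^ n : ℝ) : ℂ) • ξ (n, k + 1))
    (v : H) (m : ℕ) (l : ℤ) :
    (b v) (m, l) = ((q ^ m : ℝ) : ℂ) * v (m, l - 1) := by
  rw [← xi_coeff, ← adjoint_inner_left, adj_b_xi hb, inner_smul_left, xi_coeff,
    Complex.conj_ofReal]

lemma coeff_adj_b
    (hb : ∀ (n : ℕ) (k : ℤ), b (ξ (n, k)) = ((q ^ n : ℝ) : ℂ) • ξ (n, k + 1))
    (v : H) (m : ℕ) (l : ℤ) :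
    (adjoint b v) (m, l) = ((q ^ m : ℝ) : ℂ) * v (m, l + 1) := by
  rw [← xi_coeff, adjoint_inner_right, hb, inner_smul_left, xi_coeff, Complex.conj_ofReal]

lemma adj_E_xi {E : H →L[ℂ] H} {i j : ℕ} {n : ℤ}
    (hE : ∀ (m : ℕ) (k : ℤ), E (ξ (m, k)) = if j = m then ξ (i, k + n) else 0)
    (m : ℕ) (l : ℤ) :
    adjoint E (ξ (m, l)) = if i = m then ξ (j, l - n) else 0 := by
  apply H_ext
  rintro ⟨s1, s2⟩
  rw [← xi_coeff, adjoint_inner_right, hE]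
  have hco : ((if i = m then ξ (j, l - n) else 0 : H) : ∀ _ : ℕ × ℤ, ℂ) (s1, s2)
      = if i = m then (ξ (j, l - n) : ∀ _ : ℕ × ℤ, ℂ) (s1, s2) else 0 := by
    split <;> simp
  rw [hco]
  by_cases hjs : j = s1
  · subst hjs
    rw [if_pos rfl, xi_coeff, xi_apply, xi_apply]
    simp only [Prod.mk.injEq]
    by_cases him : i = m
    · subst him
      by_cases h2 : s2 + n = l
      · simp [h2, show s2 = l - n by omega]
      · simp [h2, show ¬(s2 = l - n) by omega]
    · simp [him]
  · rw [if_neg hjs, inner_zero_left, xi_apply]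
    simp only [Prod.mk.injEq]
    split_ifs with h1 h2
    · exact absurd h2.1.symm hjs
    · rfl
    · rfl

lemma coeff_E {E : H →L[ℂ] H} {i j : ℕ} {n : ℤ}
    (hE : ∀ (m : ℕ) (k : ℤ), E (ξ (m, k)) = if j = m then ξ (i, k + n) else 0)
    (v : H) (m : ℕ) (l : ℤ) :
    (E v) (m, l) = if i = m then v (j, l - n) else 0 := by
  rw [← xi_coeff, ← adjoint_inner_left, adj_E_xi hE]
  split_ifs with h
  · rw [xi_coeff]
  · rw [inner_zero_left]

end ops

section struct
open ContinuousLinearMap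
variable {q : ℝ} {a b T : H →L[ℂ] H} {c : ℤ → ℂ}

lemma comm_apply {U V : H →L[ℂ] H} (h : U * V = V * U) (x : H) : U (V x) = V (U x) := by
  have := ContinuousLinearMap.ext_iff.mp h x
  rwa [ContinuousLinearMap.mul_apply, ContinuousLinearMap.mul_apply] at this

lemma sqrt_ne (hq0 : 0 < q) (hq1 : q < 1) (m : ℕ) :
    (Real.sqrt (1 - q ^ (2 * (m + 1))) : ℂ) ≠ 0 := by
  have hs : (0 : ℝ) < 1 - q ^ (2 * (m + 1)) := by
    have := pow_lt_one₀ (le_of_lt hq0) hq1 (show 2 * (m + 1) ≠ 0 by omega)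
    linarith
  exact_mod_cast Complex.ofReal_ne_zero.mpr (ne_of_gt (Real.sqrt_pos.mpr hs))

lemma qpow_ne (hq0 : 0 < q) (m : ℕ) : ((q ^ m : ℝ) : ℂ) ≠ 0 :=
  Complex.ofReal_ne_zero.mpr (pow_ne_zero m hq0.ne')

/-- Structure hypothesis: `T` has matrix `δ_{mn} c(l-k)`. -/
def TStruct (T : H →L[ℂ] H) (c : ℤ → ℂ) : Prop :=
  ∀ (m : ℕ) (l : ℤ) (n : ℕ) (k : ℤ),
    (T (ξ (n, k))) (m, l) = if m = n then c (l - k) else 0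

lemma comm_a_of_struct
    (ha : ∀ (n : ℕ) (k : ℤ),
      a (ξ (n, k)) = (Real.sqrt (1 - q ^ (2 * n)) : ℂ) • ξ (n - 1, k))
    (hs : TStruct T c) : a * T = T * a := by
  apply clm_ext
  rintro ⟨n, k⟩
  apply H_ext
  rintro ⟨m, l⟩
  rw [ContinuousLinearMap.mul_apply, ContinuousLinearMap.mul_apply, coeff_a ha, hs,
    ha n k, map_smul, lp.coeFn_smul, Pi.smul_apply, hs, smul_eq_mul]
  cases n with
  | zero => simp [sqrt0]
  | succ n0 =>
    by_cases hm : m = n0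
    · subst hm; simp
    · have h1 : ¬(m + 1 = n0 + 1) := by omega
      simp [h1, hm]

lemma comm_adj_a_of_struct (hq0 : 0 < q) (hq1 : q < 1)
    (ha : ∀ (n : ℕ) (k : ℤ),
      a (ξ (n, k)) = (Real.sqrt (1 - q ^ (2 * n)) : ℂ) • ξ (n - 1, k))
    (hs : TStruct T c) : adjoint a * T = T * adjoint a := by
  apply clm_ext
  rintro ⟨n, k⟩
  apply H_ext
  rintro ⟨m, l⟩
  rw [ContinuousLinearMap.mul_apply, ContinuousLinearMap.mul_apply, coeff_adj_a ha, hs,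
    adj_a_xi ha, map_smul, lp.coeFn_smul, Pi.smul_apply, hs, smul_eq_mul]
  cases m with
  | zero => simp [sqrt0]
  | succ m0 =>
    by_cases hm : m0 = n
    · subst hm; simp
    · have h1 : ¬(m0 + 1 = n + 1) := by omega
      simp [h1, hm]

lemma comm_b_of_struct
    (hb : ∀ (n : ℕ) (k : ℤ), b (ξ (n, k)) = ((q ^ n : ℝ) : ℂ) • ξ (n, k + 1))
    (hs : TStruct T c) : b * T = T * b := by
  apply clm_ext
  rintro ⟨n, k⟩
  apply H_ext
  rintro ⟨m, l⟩
  rw [ContinuousLinearMap.mul_apply, ContinuousLinearMap.mul_apply, coeff_b hb, hs,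
    hb n k, map_smul, lp.coeFn_smul, Pi.smul_apply, hs, smul_eq_mul]
  by_cases hm : m = n
  · subst hm
    simp only [if_pos rfl]
    have h2 : l - 1 - k = l - (k + 1) := by omega
    rw [h2]
  · simp [hm]

lemma comm_adj_b_of_struct
    (hb : ∀ (n : ℕ) (k : ℤ), b (ξ (n, k)) = ((q ^ n : ℝ) : ℂ) • ξ (n, k + 1))
    (hs : TStruct T c) : adjoint b * T = T * adjoint b := by
  apply clm_ext
  rintro ⟨n, k⟩
  apply H_ext
  rintro ⟨m, l⟩
  rw [ContinuousLinearMap.mul_apply, ContinuousLinearMap.mul_apply, coeff_adj_b hb, hs,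
    adj_b_xi hb, map_smul, lp.coeFn_smul, Pi.smul_apply, hs, smul_eq_mul]
  by_cases hm : m = n
  · subst hm
    simp only [if_pos rfl]
    have h2 : l + 1 - k = l - (k - 1) := by omega
    rw [h2]
  · simp [hm]

lemma comm_E_of_struct {E : H →L[ℂ] H} {i j : ℕ} {n : ℤ}
    (hE : ∀ (m : ℕ) (k : ℤ), E (ξ (m, k)) = if j = m then ξ (i, k + n) else 0)
    (hs : TStruct T c) : E * T = T * E := by
  apply clm_ext
  rintro ⟨n', k'⟩
  apply H_ext
  rintro ⟨m, l⟩
  rw [ContinuousLinearMap.mul_apply, ContinuousLinearMap.mul_apply, coeff_E hE, hs, hE n' k']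
  by_cases hjn : j = n'
  · subst hjn
    simp only [eq_self_iff_true, if_true]
    rw [hs]
    by_cases him : i = m
    · subst him
      simp only [eq_self_iff_true, if_true]
      have h2 : l - n - k' = l - (k' + n) := by omega
      rw [h2]
    · simp [him, Ne.symm him]
  · simp only [if_neg hjn, map_zero]
    have hz : ((0 : H) : ∀ _ : ℕ × ℤ, ℂ) (m, l) = 0 := by simp
    rw [hz]
    simp

end struct

section derive
open ContinuousLinearMap
variable {q : ℝ} {a b T : H →L[ℂ] H}

lemma structB (hq0 : 0 < q) (hq1 : q < 1)
    (ha : ∀ (n : ℕ) (k : ℤ),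
      a (ξ (n, k)) = (Real.sqrt (1 - q ^ (2 * n)) : ℂ) • ξ (n - 1, k))
    (hb : ∀ (n : ℕ) (k : ℤ), b (ξ (n, k)) = ((q ^ n : ℝ) : ℂ) • ξ (n, k + 1))
    (hTa : a * T = T * a) (hTb : b * T = T * b) (hTb' : adjoint b * T = T * adjoint b) :
    TStruct T (fun d => (T (ξ (0, 0))) (0, d)) := by
  have hoff : ∀ (m : ℕ) (l : ℤ) (n : ℕ) (k : ℤ), m ≠ n → (T (ξ (n, k))) (m, l) = 0 := by
    intro m l n k hmn
    have e2 : b (adjoint b (T (ξ (n, k)))) = T (b (adjoint b (ξ (n, k)))) := by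
      rw [comm_apply hTb', comm_apply hTb]
    have eR : b (adjoint b (ξ (n, k))) = ((q ^ n : ℝ) : ℂ) • (((q ^ n : ℝ) : ℂ) • ξ (n, k)) := by
      rw [adj_b_xi hb, map_smul, hb]
      have hk : k - 1 + 1 = k := by omega
      rw [hk]
    have e3 : ((q ^ m : ℝ) : ℂ) * (((q ^ m : ℝ) : ℂ) * (T (ξ (n, k))) (m, l))
        = ((q ^ n : ℝ) : ℂ) * (((q ^ n : ℝ) : ℂ) * (T (ξ (n, k))) (m, l)) := by
      calc ((q ^ m : ℝ) : ℂ) * (((q ^ m : ℝ) : ℂ) * (T (ξ (n, k))) (m, l))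
          = (b (adjoint b (T (ξ (n, k))))) (m, l) := by
            rw [coeff_b hb, coeff_adj_b hb]
            have hl : l - 1 + 1 = l := by omega
            rw [hl]
        _ = (T (b (adjoint b (ξ (n, k))))) (m, l) := by rw [e2]
        _ = ((q ^ n : ℝ) : ℂ) * (((q ^ n : ℝ) : ℂ) * (T (ξ (n, k))) (m, l)) := by
            rw [eR, map_smul, map_smul, lp.coeFn_smul, Pi.smul_apply, lp.coeFn_smul,
              Pi.smul_apply, smul_eq_mul, smul_eq_mul]
    have hR : (q ^ (m + m) : ℝ) ≠ q ^ (n + n) := by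
      rcases Nat.lt_or_ge m n with h | h
      · exact ne_of_gt (pow_lt_pow_right_of_lt_one₀ hq0 hq1 (by omega))
      · have hnm : n < m := by omega
        exact ne_of_lt (pow_lt_pow_right_of_lt_one₀ hq0 hq1 (by omega))
    have hC : ((q ^ m : ℝ) : ℂ) * ((q ^ m : ℝ) : ℂ) ≠ ((q ^ n : ℝ) : ℂ) * ((q ^ n : ℝ) : ℂ) := by
      intro h
      apply hR
      have h2 : ((q ^ (m + m) : ℝ) : ℂ) = ((q ^ (n + n) : ℝ) : ℂ) := by
        push_cast [pow_add] at h ⊢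
        exact h
      exact_mod_cast h2
    have e4 : (((q ^ m : ℝ) : ℂ) * ((q ^ m : ℝ) : ℂ) - ((q ^ n : ℝ) : ℂ) * ((q ^ n : ℝ) : ℂ))
        * (T (ξ (n, k))) (m, l) = 0 := by
      rw [sub_mul, mul_assoc, mul_assoc, e3]
      ring
    rcases mul_eq_zero.mp e4 with h | h
    · exact absurd (sub_eq_zero.mp h) hC
    · exact h
  have hadj : ∀ (m : ℕ) (l k : ℤ), (T (ξ (m, k))) (m, l) = (T (ξ (m + 1, k))) (m + 1, l) := by
    intro m l k
    have e2 := comm_apply hTa (ξ (m + 1, k))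
    have e3 := congrArg (fun v : H => (v : ∀ _ : ℕ × ℤ, ℂ) (m, l)) e2
    simp only at e3
    rw [coeff_a ha, ha (m + 1) k, map_smul, lp.coeFn_smul, Pi.smul_apply, smul_eq_mul] at e3
    have hm : m + 1 - 1 = m := rfl
    rw [hm] at e3
    exact (mul_left_cancel₀ (sqrt_ne hq0 hq1 m) e3).symm
  have hshift : ∀ (n : ℕ) (l k : ℤ), (T (ξ (n, k + 1))) (n, l) = (T (ξ (n, k))) (n, l - 1) := by
    intro n l k
    have e2 := comm_apply hTb (ξ (n, k))
    have e3 := congrArg (fun v : H => (v : ∀ _ : ℕ × ℤ, ℂ) (n, l)) e2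
    simp only at e3
    rw [coeff_b hb, hb n k, map_smul, lp.coeFn_smul, Pi.smul_apply, smul_eq_mul] at e3
    exact mul_left_cancel₀ (qpow_ne hq0 n) e3.symm
  have hrow : ∀ (m : ℕ) (l k : ℤ), (T (ξ (m, k))) (m, l) = (T (ξ (0, k))) (0, l) := by
    intro m
    induction m with
    | zero => intro l k; rfl
    | succ m0 ih => intro l k; rw [← hadj m0 l k, ih l k]
  have hshift0 : ∀ (k l : ℤ), (T (ξ (0, k))) (0, l) = (T (ξ (0, 0))) (0, l - k) := by
    intro k
    induction k using Int.induction_on with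
    | zero => intro l; rw [sub_zero]
    | succ k0 ih =>
      intro l
      rw [hshift 0 l k0, ih (l - 1)]
      have h4 : l - 1 - (k0 : ℤ) = l - ((k0 : ℤ) + 1) := by omega
      rw [h4]
    | pred k0 ih =>
      intro l
      have h1 := hshift 0 (l + 1) (-(k0 : ℤ) - 1)
      have h2 : (-(k0 : ℤ) - 1) + 1 = -(k0 : ℤ) := by omega
      have h3 : (l : ℤ) + 1 - 1 = l := by omega
      rw [h2, h3] at h1
      rw [← h1, ih (l + 1)]
      have h4 : l + 1 - (-(k0 : ℤ)) = l - (-(k0 : ℤ) - 1) := by omega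
      rw [h4]
  intro m l n k
  by_cases hmn : m = n
  · subst hmn
    rw [if_pos rfl, hrow m l k, hshift0 k l]
  · rw [if_neg hmn]
    exact hoff m l n k hmn

lemma structA (hT : ∀ (i j : ℕ) (n : ℤ), Emap i j n * T = T * Emap i j n) :
    TStruct T (fun d => (T (ξ (0, 0))) (0, d)) := by
  have rel : ∀ (i j : ℕ) (nn : ℤ) (m : ℕ) (l : ℤ) (n' : ℕ) (k' : ℤ),
      (if m = i then (T (ξ (n', k'))) (j, l - nn) else 0)
        = (if j = n' then (T (ξ (i, k' + nn))) (m, l) else 0) := by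
    intro i j nn m l n' k'
    have e2 := comm_apply (hT i j nn) (ξ (n', k'))
    have e3 := congrArg (fun v : H => (v : ∀ _ : ℕ × ℤ, ℂ) (m, l)) e2
    simp only at e3
    rw [Emap_apply, Emap_xi] at e3
    have e4 : (if m = i then (T (ξ (n', k'))) (j, l - nn) else 0)
        = (T (if j = n' then ξ (i, k' + nn) else 0)) (m, l) := e3
    rw [e4]
    by_cases hjn : j = n'
    · rw [if_pos hjn, if_pos hjn]
    · rw [if_neg hjn, if_neg hjn, map_zero]
      simp
  have hoff : ∀ (m : ℕ) (l : ℤ) (n : ℕ) (k : ℤ), m ≠ n → (T (ξ (n, k))) (m, l) = 0 := by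
    intro m l n k hmn
    have h1 := rel m m 0 m l n k
    simp only [eq_self_iff_true, if_true, sub_zero, if_neg hmn] at h1
    exact h1
  have hrow : ∀ (i : ℕ) (l k' : ℤ), (T (ξ (i, k'))) (i, l) = (T (ξ (0, k'))) (0, l) := by
    intro i l k'
    have h1 := rel i 0 0 i l 0 k'
    simp only [eq_self_iff_true, if_true, sub_zero, add_zero] at h1
    exact h1.symm
  have hshift : ∀ (l k' : ℤ), (T (ξ (0, k'))) (0, l) = (T (ξ (0, 0))) (0, l - k') := by
    intro l k'
    have h1 := rel 0 0 k' 0 l 0 0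
    simp only [eq_self_iff_true, if_true, zero_add] at h1
    exact h1.symm
  intro m l n k
  by_cases hmn : m = n
  · subst hmn
    rw [if_pos rfl, hrow m l k, hshift l k]
  · rw [if_neg hmn]
    exact hoff m l n k hmn

end derive

open ContinuousLinearMap in
/-- The von Neumann algebra generated by `{a, a*, b, b*}` coincides with
`B(ℓ²(ℕ)) ⊗̄ L(ℤ)`: the double centralizer (bicommutant) of `{a, a*, b, b*}`
equals the double centralizer of the set of all `e_{ij} ⊗ S^n`. -/
theorem stmt_8 (q : ℝ) (hq0 : 0 < q) (hq1 : q < 1)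
    (a b : H →L[ℂ] H)
    (ha : ∀ (n : ℕ) (k : ℤ),
      a (ξ (n, k)) = (Real.sqrt (1 - q ^ (2 * n)) : ℂ) • ξ (n - 1, k))
    (hb : ∀ (n : ℕ) (k : ℤ), b (ξ (n, k)) = ((q ^ n : ℝ) : ℂ) • ξ (n, k + 1)) :
    Set.centralizer (Set.centralizer {a, adjoint a, b, adjoint b}) =
      Set.centralizer (Set.centralizer
        {T : H →L[ℂ] H | ∃ (i j : ℕ) (n : ℤ),
          ∀ (m : ℕ) (k : ℤ), T (ξ (m, k)) = if j = m then ξ (i, k + n) else 0}) := by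
  have hset : Set.centralizer ({a, adjoint a, b, adjoint b} : Set (H →L[ℂ] H))
      = Set.centralizer {T : H →L[ℂ] H | ∃ (i j : ℕ) (n : ℤ),
          ∀ (m : ℕ) (k : ℤ), T (ξ (m, k)) = if j = m then ξ (i, k + n) else 0} := by
    ext T
    simp only [Set.mem_centralizer_iff]
    constructor
    · intro hT E hE
      obtain ⟨i, j, n, hE⟩ := hE
      have haT : a * T = T * a := hT a (by simp)
      have hbT : b * T = T * b := hT b (by simp)
      have hbT' : adjoint b * T = T * adjoint b := hT (adjoint b) (by simp)
      exact comm_E_of_struct hE (structB hq0 hq1 ha hb haT hbT hbT')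
    · intro hT g hg
      have hstruct := structA (T := T)
        (fun i j n => hT (Emap i j n) ⟨i, j, n, Emap_xi i j n⟩)
      simp only [Set.mem_insert_iff, Set.mem_singleton_iff] at hg
      rcases hg with rfl | rfl | rfl | rfl
      · exact comm_a_of_struct ha hstruct
      · exact comm_adj_a_of_struct hq0 hq1 ha hstruct
      · exact comm_b_of_struct hb hstruct
      · exact comm_adj_b_of_struct hb hstruct
  rw [hset]


end
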